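/- Let p be a prime and let T be a solvable transitive subgroup of the symmetric group on a set of size p. Then there exists σ in T of order p such that the cyclic subgroup ⟨σ⟩ is normal in T, and the quotient T/⟨σ⟩ is cyclic of order dividing p−1. -/

import Mathlib

open Equiv Subgroup
open scoped commutatorElement

lemma aux_mem_zpowers_of_commute {X : Type*} [Fintype X] [Nonempty X] {g f : Equiv.Perm X}
    (hg : g.IsCycle) (hs : ∀ x, g x ≠ x) (hc : Commute f g) : f ∈ Subgroup.zpowers g := by
  obtain ⟨x⟩ := ‹Nonempty X›
  obtain ⟨i, hi⟩ := hg.exists_zpow_eq (hs x) (hs (f x))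
  refine ⟨i, ?_⟩
  ext y
  obtain ⟨j, hj⟩ := hg.exists_zpow_eq (hs x) (hs y)
  have hcz : Commute f (g ^ j) := hc.zpow_right j
  calc (g ^ i) y = (g ^ i) ((g ^ j) x) := by rw [hj]
    _ = (g ^ j) ((g ^ i) x) := by
        rw [← Equiv.Perm.mul_apply, ← Equiv.Perm.mul_apply, zpow_mul_comm]
    _ = (g ^ j) (f x) := by rw [hi]
    _ = f ((g ^ j) x) := by rw [← Equiv.Perm.mul_apply, ← Equiv.Perm.mul_apply, hcz]
    _ = f y := by rw [hj]

lemma aux_isCycle_and_moves {p : ℕ} (hp : p.Prime) {X : Type*} [Fintype X]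
    (hX : Fintype.card X = p) {g : Equiv.Perm X} (hg : orderOf g = p) :
    g.IsCycle ∧ ∀ x, g x ≠ x := by
  classical
  have h1 : (Fintype.card X).Prime := hX ▸ hp
  have hc : g.IsCycle := Equiv.Perm.isCycle_of_prime_order'' h1 (hg.trans hX.symm)
  have hsupp : g.support = Finset.univ := by
    apply Finset.eq_univ_of_card
    rw [← hc.orderOf, hg, hX]
  exact ⟨hc, fun x => Equiv.Perm.mem_support.mp (hsupp ▸ Finset.mem_univ x)⟩

def mulAutMultiplicativeAux (A : Type*) [AddGroup A] : MulAut (Multiplicative A) ≃* Multiplicative (AddAut A) :=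
  MulAutMultiplicative A

noncomputable def auxMulAutEquivUnits (G : Type*) [Group G] [Finite G] [h : IsCyclic G] :
    MulAut G ≃* (ZMod (Nat.card G))ˣ :=
  ((MulAut.congr (zmodCyclicMulEquiv h)).symm.trans
    (mulAutMultiplicativeAux (ZMod (Nat.card G)))).trans (ZMod.AddAutEquivUnits (Nat.card G)).toMultiplicative

/-- A solvable transitive subgroup `T` of the symmetric group on a set of prime size `p`
contains an element `σ` of order `p` such that `⟨σ⟩` is normal in `T` and `T/⟨σ⟩` is
cyclic of order dividing `p - 1`. -/
theorem solvable_transitive_prime_degree_structure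
    {p : ℕ} (hp : p.Prime) {X : Type*} [Fintype X] (hX : Fintype.card X = p)
    (T : Subgroup (Equiv.Perm X)) (hsolv : IsSolvable T)
    (htrans : ∀ x y : X, ∃ σ ∈ T, σ x = y) :
    ∃ σ : T, orderOf σ = p ∧ (Subgroup.zpowers σ).Normal ∧
      (∀ [_h : (Subgroup.zpowers σ).Normal], IsCyclic (T ⧸ Subgroup.zpowers σ)) ∧
      Nat.card (T ⧸ Subgroup.zpowers σ) ∣ p - 1 := by
  classical
  haveI hfact : Fact p.Prime := ⟨hp⟩
  haveI : Nonempty X := Fintype.card_pos_iff.mp (by rw [hX]; exact hp.pos)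
  have hcardX : Nat.card X = p := by rw [Nat.card_eq_fintype_card, hX]
  haveI hpre : MulAction.IsPretransitive T X := by
    constructor
    intro x y
    obtain ⟨σ, hσ, h⟩ := htrans x y
    exact ⟨⟨σ, hσ⟩, h⟩
  -- T is nontrivial
  haveI : Nontrivial T := by
    obtain ⟨x, y, hxy⟩ := Fintype.exists_pair_of_one_lt_card (by rw [hX]; exact hp.one_lt)
    obtain ⟨τ, hτ, hτxy⟩ := htrans x y
    refine ⟨⟨τ, hτ⟩, 1, fun h => hxy ?_⟩
    have : τ = 1 := congrArg Subtype.val h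
    rw [← hτxy, this, Equiv.Perm.one_apply]
  -- minimal nontrivial derived series term
  have hex : ∃ m, derivedSeries (↥T) m = ⊥ := hsolv.solvable
  have hk0 : Nat.find hex ≠ 0 := by
    intro h
    have := Nat.find_spec hex
    rw [h] at this
    exact top_ne_bot this
  obtain ⟨m, hm⟩ := Nat.exists_eq_succ_of_ne_zero hk0
  set N : Subgroup ↥T := derivedSeries (↥T) m with hNdef
  haveI hNnormal : N.Normal := derivedSeries_normal _ _
  have hNbot : N ≠ ⊥ := Nat.find_min hex (by omega)
  have hNtriv : derivedSeries (↥T) (m + 1) = ⊥ := by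
    have := Nat.find_spec hex
    rwa [hm] at this
  have hNcomm : ∀ a b : ↥T, a ∈ N → b ∈ N → a * b = b * a := by
    intro a b ha hb
    have h1 : ⁅a, b⁆ ∈ derivedSeries (↥T) (m + 1) := by
      rw [derivedSeries_succ]
      exact Subgroup.commutator_mem_commutator ha hb
    rw [hNtriv, Subgroup.mem_bot] at h1
    exact commutatorElement_eq_one_iff_mul_comm.mp h1
  -- N contains a nontrivial element moving some point
  obtain ⟨a, haN, ha1⟩ : ∃ a, a ∈ N ∧ a ≠ 1 := by
    by_contra h
    push_neg at h
    exact hNbot ((Subgroup.eq_bot_iff_forall N).mpr h)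
  obtain ⟨x₀, hx₀⟩ : ∃ x, (a : Equiv.Perm X) x ≠ x := by
    by_contra h
    push_neg at h
    exact ha1 (Subtype.ext (Equiv.ext h))
  -- the orbit of N through x₀ is a block, hence has cardinality dividing p, hence = p
  have hblock := MulAction.IsBlock.orbit_of_normal (G := ↥T) (N := N) (X := X) x₀
  have hmem0 : x₀ ∈ MulAction.orbit (↥N) x₀ := MulAction.mem_orbit_self x₀
  have hmema : (a : Equiv.Perm X) x₀ ∈ MulAction.orbit (↥N) x₀ :=
    ⟨(⟨a, haN⟩ : ↥N), rfl⟩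
  have hdvd : (MulAction.orbit (↥N) x₀).ncard ∣ p := by
    rw [← hcardX]
    exact hblock.ncard_dvd_card ⟨x₀, hmem0⟩
  have hne1 : (MulAction.orbit (↥N) x₀).ncard ≠ 1 := by
    intro h
    obtain ⟨b, hb⟩ := Set.ncard_eq_one.mp h
    rw [hb] at hmem0 hmema
    exact hx₀ (hmema.trans hmem0.symm)
  have hcp : (MulAction.orbit (↥N) x₀).ncard = p :=
    ((hp.eq_one_or_self_of_dvd _ hdvd).resolve_left hne1)
  have huniv : MulAction.orbit (↥N) x₀ = Set.univ := by
    apply hblock.eq_univ_of_card_lt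
    rw [hcp, hcardX]
    have := hp.pos
    omega
  -- p divides the cardinality of N
  have hpN : p ∣ Nat.card ↥N := by
    have h1 : Nat.card (↥N ⧸ MulAction.stabilizer (↥N) x₀) = p := by
      rw [← Nat.card_congr (MulAction.orbitEquivQuotientStabilizer (↥N) x₀)]
      rw [← hcp, Nat.card_coe_set_eq]
    rw [Subgroup.card_eq_card_quotient_mul_card_subgroup (MulAction.stabilizer (↥N) x₀), h1]
    exact Dvd.intro _ rfl
  -- Cauchy: get σ of order p inside N
  obtain ⟨σ₀, hσ₀⟩ := exists_prime_orderOf_dvd_card' (G := ↥N) p hpN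
  set σ : ↥T := (σ₀ : ↥T) with hσdef
  have hσN : σ ∈ N := σ₀.2
  have horder : orderOf σ = p := by rw [Subgroup.orderOf_coe]; exact hσ₀
  set g : Equiv.Perm X := (σ : Equiv.Perm X) with hgdef
  have hgorder : orderOf g = p := by rw [Subgroup.orderOf_coe]; exact horder
  obtain ⟨hcyc, hmove⟩ := aux_isCycle_and_moves hp hX hgorder
  -- anything commuting with σ is a power of σ
  have hzpow : ∀ τ : ↥T, τ * σ = σ * τ → τ ∈ Subgroup.zpowers σ := by
    intro τ hcomm
    have hc : Commute (τ : Equiv.Perm X) g := by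
      have := congrArg (Subtype.val) hcomm
      show (τ : Equiv.Perm X) * g = g * τ
      simpa using this
    obtain ⟨i, hi⟩ := Subgroup.mem_zpowers_iff.mp (aux_mem_zpowers_of_commute hcyc hmove hc)
    refine Subgroup.mem_zpowers_iff.mpr ⟨i, Subtype.ext ?_⟩
    rw [← hi]
    push_cast
    rfl
  -- zpowers σ = N
  have hEq : Subgroup.zpowers σ = N := by
    apply le_antisymm (Subgroup.zpowers_le.mpr hσN)
    intro τ hτ
    exact hzpow τ (hNcomm τ σ hτ hσN)
  have hNormal : (Subgroup.zpowers σ).Normal := hEq ▸ hNnormal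
  haveI := hNormal
  -- the conjugation map
  set f : ↥T →* MulAut ↥(Subgroup.zpowers σ) := MulAut.conjNormal
  have hker : f.ker = Subgroup.zpowers σ := by
    apply le_antisymm
    · intro τ hτ
      apply hzpow
      have h1 : f τ ⟨σ, Subgroup.mem_zpowers σ⟩ = ⟨σ, Subgroup.mem_zpowers σ⟩ := by
        rw [MonoidHom.mem_ker.mp hτ]; rfl
      have h2 : (τ : ↥T) * σ * τ⁻¹ = σ := congrArg Subtype.val h1
      calc τ * σ = τ * σ * τ⁻¹ * τ := by group
        _ = σ * τ := by rw [h2]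
    · apply Subgroup.zpowers_le.mpr
      rw [MonoidHom.mem_ker]
      refine MulEquiv.ext fun h => Subtype.ext ?_
      obtain ⟨i, hi⟩ := Subgroup.mem_zpowers_iff.mp h.2
      show ((f σ h : ↥T) : ↥T) = ((1 : MulAut ↥(Subgroup.zpowers σ)) h : ↥T)
      rw [MulAut.conjNormal_apply, MulAut.one_apply, ← hi]
      group
  set Q := T ⧸ Subgroup.zpowers σ
  have e : Q ≃* (↥T ⧸ f.ker) := QuotientGroup.quotientMulEquivOfEq hker.symm
  set φ : Q →* MulAut ↥(Subgroup.zpowers σ) := (QuotientGroup.kerLift f).comp e.toMonoidHom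
  have hinj : Function.Injective φ := (QuotientGroup.kerLift_injective f).comp e.injective
  have hcardz : Nat.card ↥(Subgroup.zpowers σ) = p := by
    rw [Nat.card_zpowers, horder]
  haveI : IsCyclic ↥(Subgroup.zpowers σ) := isCyclic_of_prime_card hcardz
  have hcardAut : Nat.card (MulAut ↥(Subgroup.zpowers σ)) = p - 1 := by
    rw [IsCyclic.card_mulAut, hcardz, Nat.totient_prime hp]
  haveI hcycAut : IsCyclic (MulAut ↥(Subgroup.zpowers σ)) := by
    have e2 := auxMulAutEquivUnits ↥(Subgroup.zpowers σ)
    haveI : IsCyclic (ZMod (Nat.card ↥(Subgroup.zpowers σ)))ˣ :=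
      hcardz ▸ inferInstanceAs (IsCyclic (ZMod p)ˣ)
    exact isCyclic_of_surjective e2.symm e2.symm.surjective
  have hcycQ : IsCyclic Q := by
    have e3 := MulEquiv.subgroupCongr (rfl : φ.range = φ.range)
    have e4 : Q ≃* φ.range := MulEquiv.ofBijective (φ.rangeRestrict)
      ⟨fun x y h => hinj (by simpa using congrArg Subtype.val h), φ.rangeRestrict_surjective⟩
    exact isCyclic_of_surjective e4.symm e4.symm.surjective
  refine ⟨σ, horder, hNormal, fun {_h} => hcycQ, ?_⟩
  calc Nat.card Q ∣ Nat.card (MulAut ↥(Subgroup.zpowers σ)) :=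
        Subgroup.card_dvd_of_injective φ hinj
    _ = p - 1 := hcardAut
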